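/- The function G(t) = M(t)/ψ(t)² + 2/ψ(t) on (0,π), where M(t) = 1/t² + 1/(π−t)² − cos²t/sin²t, satisfies lim_{t→0⁺} G(t) = 0, lim_{t→π⁻} G(t) = 0, |G(t)| ≤ B for every t ∈ (0,π), and G(π/2) = B, where B = 2/(1+log π) + 8/(π²(1+log π)²). -/

import Mathlib

open Real Set Filter Topology

noncomputable section

/-- `ψ(t) = log (π e / sin t)`. -/
def psi (t : ℝ) : ℝ := Real.log (π * Real.exp 1 / Real.sin t)

/-- The function `M` from the proof of Theorem 1. -/
def Mfun (t : ℝ) : ℝ := 1 / t ^ 2 + 1 / (π - t) ^ 2 - Real.cos t ^ 2 / Real.sin t ^ 2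

/-- The function `G` from the proof of Theorem 1. -/
def Gfun (t : ℝ) : ℝ := Mfun t / psi t ^ 2 + 2 / psi t

/-- `B = 2/(1+log π) + 8/(π²(1+log π)²)`. -/
def Bconst : ℝ := 2 / (1 + Real.log π) + 8 / (π ^ 2 * (1 + Real.log π) ^ 2)

/-- Half-angle identity for `1/sin²`. -/
lemma csc_sq_half (x : ℝ) (hx : Real.sin x ≠ 0) :
    1 / Real.sin x ^ 2
      = (1 / Real.sin (x / 2) ^ 2 + 1 / Real.sin ((x + π) / 2) ^ 2) / 4 := by
  have hs : Real.sin x = 2 * Real.sin (x / 2) * Real.cos (x / 2) := by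
    have := Real.sin_two_mul (x / 2); rwa [show 2 * (x / 2) = x by ring] at this
  have h1 : Real.sin (x / 2) ≠ 0 := by
    intro h; apply hx; rw [hs, h]; ring
  have h2 : Real.cos (x / 2) ≠ 0 := by
    intro h; apply hx; rw [hs, h]; ring
  have h3 : Real.sin ((x + π) / 2) = Real.cos (x / 2) := by
    rw [show (x + π) / 2 = x / 2 + π / 2 by ring, Real.sin_add_pi_div_two]
  have hpyth := Real.sin_sq_add_cos_sq (x / 2)
  rw [hs, h3]
  field_simp
  linarith [hpyth]

lemma sin_aux_ne_zero {x : ℝ} (hx : Real.sin x ≠ 0) (n k : ℕ) :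
    Real.sin ((x + k * π) / 2 ^ n) ≠ 0 := by
  intro h
  rw [Real.sin_eq_zero_iff] at h
  obtain ⟨m, hm⟩ := h
  apply hx
  rw [Real.sin_eq_zero_iff]
  refine ⟨m * 2 ^ n - k, ?_⟩
  have h2 : (2:ℝ) ^ n ≠ 0 := by positivity
  push_cast
  field_simp at hm
  linarith [hm]

lemma csc_sq_sum (n : ℕ) (x : ℝ) (hx : Real.sin x ≠ 0) :
    1 / Real.sin x ^ 2
      = (∑ k ∈ Finset.range (2 ^ n), 1 / Real.sin ((x + k * π) / 2 ^ n) ^ 2) / 4 ^ n := by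
  induction n generalizing x with
  | zero => simp
  | succ n ih =>
    rw [ih x hx]
    have key : ∀ k ∈ Finset.range (2 ^ n),
        1 / Real.sin ((x + k * π) / 2 ^ n) ^ 2
        = (1 / Real.sin ((x + k * π) / 2 ^ (n + 1)) ^ 2
           + 1 / Real.sin ((x + (2 ^ n + k : ℕ) * π) / 2 ^ (n + 1)) ^ 2) / 4 := by
      intro k _
      rw [csc_sq_half _ (sin_aux_ne_zero hx n k)]
      have h0 : (2:ℝ) ^ n ≠ 0 := by positivity
      have e1 : (x + k * π) / 2 ^ n / 2 = (x + k * π) / 2 ^ (n + 1) := by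
        rw [pow_succ]; ring
      have e2 : ((x + k * π) / 2 ^ n + π) / 2 = (x + (2 ^ n + k : ℕ) * π) / 2 ^ (n + 1) := by
        push_cast; rw [pow_succ]; field_simp; ring
      rw [e1, e2]
    rw [Finset.sum_congr rfl key, ← Finset.sum_div,
      show (2:ℕ) ^ (n + 1) = 2 ^ n + 2 ^ n from by rw [pow_succ, mul_two],
      Finset.sum_range_add, ← Finset.sum_add_distrib, div_div, ← pow_succ']

lemma sin_sq_le_sq (u : ℝ) : Real.sin u ^ 2 ≤ u ^ 2 := by
  have key : ∀ v : ℝ, 0 ≤ v → Real.sin v ^ 2 ≤ v ^ 2 := by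
    intro v hv
    apply sq_le_sq'
    · rcases le_total v 1 with h1 | h1
      · have := Real.sin_nonneg_of_nonneg_of_le_pi hv (h1.trans (by linarith [Real.pi_gt_three]))
        linarith
      · linarith [Real.neg_one_le_sin v]
    · exact Real.sin_le hv
  rcases le_total 0 u with h | h
  · exact key u h
  · have := key (-u) (by linarith)
    rw [Real.sin_neg, neg_sq, neg_sq] at this
    exact this

lemma one_div_sq_le_csc_sq {u : ℝ} (hu : Real.sin u ≠ 0) :
    1 / u ^ 2 ≤ 1 / Real.sin u ^ 2 := by
  have h1 : 0 < Real.sin u ^ 2 := by positivity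
  exact one_div_le_one_div_of_le h1 (sin_sq_le_sq u)

lemma pair_bound {a b : ℝ} (ha : 0 < a) (hb : 0 < b) :
    8 / (a + b) ^ 2 ≤ 1 / a ^ 2 + 1 / b ^ 2 := by
  rw [div_add_div _ _ (by positivity) (by positivity),
    div_le_div_iff₀ (by positivity) (by positivity)]
  nlinarith [sq_nonneg (a ^ 2 - b ^ 2), mul_nonneg (mul_nonneg ha.le hb.le) (sq_nonneg (a - b))]

lemma csc_sq_ge (t : ℝ) (ht : t ∈ Ioo 0 π) (N : ℕ) :
    1 / t ^ 2 + 1 / (π - t) ^ 2 + ∑ i ∈ Finset.range N, 8 / (π ^ 2 * (2 * (i:ℝ) + 3) ^ 2)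
      ≤ 1 / Real.sin t ^ 2 := by
  obtain ⟨ht0, htπ⟩ := ht
  have hsin : Real.sin t ≠ 0 := (Real.sin_pos_of_pos_of_lt_pi ht0 htπ).ne'
  set n : ℕ := N + 1 with hn
  set m : ℕ := 2 ^ n with hmdef
  have hNm : N + 1 ≤ m := (@Nat.lt_two_pow_self (N + 1)).le
  set y : ℝ := t - m * π with hy
  have hsy : Real.sin y ^ 2 = Real.sin t ^ 2 ∧ Real.sin y ≠ 0 := by
    have h := Real.sin_add_int_mul_pi t (-(m:ℤ))
    rw [Int.cast_neg, Int.cast_natCast,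
      show t + -(m:ℝ) * π = y from by rw [hy]; ring] at h
    rcases Int.even_or_odd (-(m:ℤ)) with he | ho
    · rw [he.neg_one_zpow, one_mul] at h
      exact ⟨by rw [h], by rw [h]; exact hsin⟩
    · rw [Odd.neg_one_zpow ho, neg_one_mul] at h
      exact ⟨by rw [h]; ring, by rw [h]; simpa using hsin⟩
  obtain ⟨hsy2, hyne⟩ := hsy
  set q : ℕ → ℝ := fun k => 1 / (y + k * π) ^ 2 with hq
  have hqnonneg : ∀ k, 0 ≤ q k := fun k => by positivity
  -- step 1
  have step1 : ∑ k ∈ Finset.range (2 ^ (n + 1)), q k ≤ 1 / Real.sin t ^ 2 := by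
    rw [← hsy2, csc_sq_sum (n + 1) y hyne, Finset.sum_div]
    apply Finset.sum_le_sum
    intro k _
    have h1 := one_div_sq_le_csc_sq (sin_aux_ne_zero hyne (n + 1) k)
    have h2 : (1:ℝ) / ((y + k * π) / 2 ^ (n + 1)) ^ 2
        = 4 ^ (n + 1) * (1 / (y + k * π) ^ 2) := by
      rw [div_pow, one_div_div,
        show ((2:ℝ) ^ (n + 1)) ^ 2 = 4 ^ (n + 1) from by
          rw [pow_right_comm]; norm_num]
      ring
    rw [h2] at h1
    rw [le_div_iff₀ (by positivity : (0:ℝ) < 4 ^ (n + 1))]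
    calc q k * 4 ^ (n + 1) = 4 ^ (n + 1) * (1 / (y + k * π) ^ 2) := by rw [hq]; ring
    _ ≤ _ := h1
  -- step 2 : pairing
  have hsplit : ∑ k ∈ Finset.range (2 ^ (n + 1)), q k
      = ∑ i ∈ Finset.range m, (q (m - 1 - i) + q (m + i)) := by
    rw [show 2 ^ (n + 1) = m + m from by rw [hmdef, pow_succ, mul_two],
      Finset.sum_range_add, ← Finset.sum_range_reflect (fun j => q j) m,
      ← Finset.sum_add_distrib]
  -- evaluations
  have hq_eval1 : ∀ i, i < m → q (m - 1 - i) = 1 / (((i:ℝ) + 1) * π - t) ^ 2 := by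
    intro i hi
    have hcast : ((m - 1 - i : ℕ) : ℝ) = (m:ℝ) - 1 - i := by
      rw [Nat.sub_sub, Nat.cast_sub (by omega : 1 + i ≤ m)]
      push_cast; ring
    show 1 / (y + ((m - 1 - i : ℕ) : ℝ) * π) ^ 2 = _
    rw [hcast, show y + ((m:ℝ) - 1 - i) * π = -((((i:ℝ) + 1) * π - t)) from by rw [hy]; ring,
      neg_sq]
  have hq_eval2 : ∀ i : ℕ, q (m + i) = 1 / (t + (i:ℝ) * π) ^ 2 := by
    intro i
    show 1 / (y + ((m + i : ℕ) : ℝ) * π) ^ 2 = _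
    rw [show y + ((m + i : ℕ) : ℝ) * π = t + (i:ℝ) * π from by push_cast [hy]; ring]
  -- pair lower bounds
  have hpair : ∀ i ∈ Finset.range N, 8 / (π ^ 2 * (2 * (i:ℝ) + 3) ^ 2)
      ≤ q (m - 1 - (i + 1)) + q (m + (i + 1)) := by
    intro i hiN
    have hi : i + 1 < m := by
      have := Finset.mem_range.mp hiN; omega
    rw [hq_eval1 _ hi, hq_eval2]
    have ha : (0:ℝ) < t + ((i + 1 : ℕ):ℝ) * π := by
      have : (0:ℝ) ≤ ((i + 1 : ℕ):ℝ) * π := by positivity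
      linarith
    have hb : (0:ℝ) < (((i + 1 : ℕ):ℝ) + 1) * π - t := by
      have h1 : π ≤ (((i + 1 : ℕ):ℝ) + 1) * π := by
        nlinarith [Real.pi_pos, (by positivity : (0:ℝ) ≤ ((i + 1 : ℕ):ℝ))]
      linarith
    have := pair_bound ha hb
    calc 8 / (π ^ 2 * (2 * (i:ℝ) + 3) ^ 2)
        = 8 / ((t + ((i + 1 : ℕ):ℝ) * π) + ((((i + 1 : ℕ):ℝ) + 1) * π - t)) ^ 2 := by
          rw [show (t + ((i + 1 : ℕ):ℝ) * π) + ((((i + 1 : ℕ):ℝ) + 1) * π - t)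
              = (2 * (i:ℝ) + 3) * π from by push_cast; ring]
          rw [show ((2 * (i:ℝ) + 3) * π) ^ 2 = π ^ 2 * (2 * (i:ℝ) + 3) ^ 2 from by ring]
    _ ≤ 1 / (t + ((i + 1 : ℕ):ℝ) * π) ^ 2 + 1 / ((((i + 1 : ℕ):ℝ) + 1) * π - t) ^ 2 := this
    _ = 1 / ((((i + 1 : ℕ):ℝ) + 1) * π - t) ^ 2 + 1 / (t + ((i + 1 : ℕ):ℝ) * π) ^ 2 := by
          ring
  -- assemble
  have hsum_eq : ∑ i ∈ Finset.range m, (q (m - 1 - i) + q (m + i))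
      = (q (m - 1 - 0) + q (m + 0))
        + ∑ i ∈ Finset.range (m - 1), (q (m - 1 - (i + 1)) + q (m + (i + 1))) := by
    rw [show m = (m - 1) + 1 from by omega, Finset.sum_range_succ']
    simp only [show (m - 1) + 1 = m from by omega]
    ring
  have hmono : ∑ i ∈ Finset.range N, (q (m - 1 - (i + 1)) + q (m + (i + 1)))
      ≤ ∑ i ∈ Finset.range (m - 1), (q (m - 1 - (i + 1)) + q (m + (i + 1))) := by
    apply Finset.sum_le_sum_of_subset_of_nonneg
    · exact Finset.range_subset_range.mpr (by omega)
    · intro i _ _; exact add_nonneg (hqnonneg _) (hqnonneg _)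
  have hp0 : q (m - 1 - 0) + q (m + 0) = 1 / (π - t) ^ 2 + 1 / t ^ 2 := by
    rw [hq_eval1 0 (by omega), hq_eval2 0]
    norm_num
  calc 1 / t ^ 2 + 1 / (π - t) ^ 2 + ∑ i ∈ Finset.range N, 8 / (π ^ 2 * (2 * (i:ℝ) + 3) ^ 2)
      ≤ 1 / t ^ 2 + 1 / (π - t) ^ 2
        + ∑ i ∈ Finset.range N, (q (m - 1 - (i + 1)) + q (m + (i + 1))) := by
        have := Finset.sum_le_sum hpair
        linarith
  _ ≤ 1 / t ^ 2 + 1 / (π - t) ^ 2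
        + ∑ i ∈ Finset.range (m - 1), (q (m - 1 - (i + 1)) + q (m + (i + 1))) := by linarith
  _ = ∑ i ∈ Finset.range m, (q (m - 1 - i) + q (m + i)) := by rw [hsum_eq, hp0]; ring
  _ = ∑ k ∈ Finset.range (2 ^ (n + 1)), q k := hsplit.symm
  _ ≤ 1 / Real.sin t ^ 2 := step1

lemma hasSum_tail :
    HasSum (fun i : ℕ => 8 / (π ^ 2 * (2 * (i:ℝ) + 3) ^ 2)) (1 - 8 / π ^ 2) := by
  have h1 : HasSum (fun n : ℕ => (1:ℝ) / (n:ℝ) ^ 2) (π ^ 2 / 6) := hasSum_zeta_two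
  have heven : HasSum (fun k : ℕ => (1:ℝ) / ((2 * k : ℕ):ℝ) ^ 2) (π ^ 2 / 24) := by
    have h2 := h1.mul_left (1/4 : ℝ)
    have hfun : (fun k : ℕ => (1:ℝ) / ((2 * k : ℕ):ℝ) ^ 2)
        = fun k : ℕ => (1/4 : ℝ) * ((1:ℝ) / (k:ℝ) ^ 2) := by
      funext k; push_cast; rw [mul_pow]; rw [mul_one_div, div_div]; norm_num
    rw [hfun, show (π:ℝ) ^ 2 / 24 = 1/4 * (π ^ 2 / 6) from by ring]
    exact h2
  have hodd_summable : Summable (fun k : ℕ => (1:ℝ) / ((2 * k + 1 : ℕ):ℝ) ^ 2) :=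
    h1.summable.comp_injective (fun a b hab => by omega)
  have hodd : HasSum (fun k : ℕ => (1:ℝ) / ((2 * k + 1 : ℕ):ℝ) ^ 2) (π ^ 2 / 8) := by
    have hT := hodd_summable.hasSum
    have htot := HasSum.even_add_odd (f := fun n : ℕ => (1:ℝ) / (n:ℝ) ^ 2) heven hT
    have := h1.unique htot
    have hval : ∑' k : ℕ, (1:ℝ) / ((2 * k + 1 : ℕ):ℝ) ^ 2 = π ^ 2 / 8 := by linarith
    rwa [hval] at hT
  have hshift : HasSum (fun k : ℕ => (1:ℝ) / ((2 * (k + 1) + 1 : ℕ):ℝ) ^ 2) (π ^ 2 / 8 - 1) := by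
    rw [hasSum_nat_add_iff (f := fun k : ℕ => (1:ℝ) / ((2 * k + 1 : ℕ):ℝ) ^ 2) 1]
    simpa using hodd
  have hfin := hshift.mul_left (8 / π ^ 2 : ℝ)
  have hfun2 : (fun k : ℕ => (8 / π ^ 2 : ℝ) * ((1:ℝ) / ((2 * (k + 1) + 1 : ℕ):ℝ) ^ 2))
      = fun i : ℕ => 8 / (π ^ 2 * (2 * (i:ℝ) + 3) ^ 2) := by
    funext k; push_cast; field_simp; ring
  rw [hfun2] at hfin
  rw [show (1:ℝ) - 8 / π ^ 2 = 8 / π ^ 2 * (π ^ 2 / 8 - 1) from by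
    rw [mul_sub, div_mul_div_comm, mul_comm (8:ℝ) (π ^ 2), div_self (by positivity), mul_one]]
  exact hfin

lemma Mfun_le {t : ℝ} (ht : t ∈ Ioo 0 π) : Mfun t ≤ 8 / π ^ 2 := by
  have hsin : 0 < Real.sin t := Real.sin_pos_of_pos_of_lt_pi ht.1 ht.2
  have hkey : 1 - 8 / π ^ 2 ≤ 1 / Real.sin t ^ 2 - 1 / t ^ 2 - 1 / (π - t) ^ 2 := by
    have hlim := hasSum_tail.tendsto_sum_nat
    apply le_of_tendsto hlim
    filter_upwards with N
    linarith [csc_sq_ge t ht N]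
  have hcot : Real.cos t ^ 2 / Real.sin t ^ 2 = 1 / Real.sin t ^ 2 - 1 := by
    field_simp
    linear_combination Real.sin_sq_add_cos_sq t
  unfold Mfun
  rw [hcot]
  linarith

lemma cot_sq_le_aux {t : ℝ} (h0 : 0 < t) (h2 : t ≤ π / 2) :
    Real.cos t ^ 2 / Real.sin t ^ 2 ≤ 1 / t ^ 2 := by
  have hsin : 0 < Real.sin t := Real.sin_pos_of_pos_of_lt_pi h0 (by linarith [Real.pi_pos])
  rcases eq_or_lt_of_le h2 with h | h
  · rw [h, Real.cos_pi_div_two]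
    norm_num
    positivity
  · have hcos : 0 < Real.cos t := Real.cos_pos_of_mem_Ioo ⟨by linarith, h⟩
    have htan := Real.lt_tan h0 h
    have hsin_ge : t * Real.cos t ≤ Real.sin t := by
      rw [Real.tan_eq_sin_div_cos, lt_div_iff₀ hcos] at htan
      linarith
    rw [div_le_div_iff₀ (by positivity) (by positivity)]
    nlinarith [mul_pos h0 hcos]

lemma Mfun_nonneg {t : ℝ} (ht : t ∈ Ioo 0 π) : 0 ≤ Mfun t := by
  unfold Mfun
  rcases le_or_gt t (π / 2) with h | h
  · have h1 := cot_sq_le_aux ht.1 h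
    have h2 : (0:ℝ) ≤ 1 / (π - t) ^ 2 := by positivity
    linarith
  · have h1 : 0 < π - t := by linarith [ht.2]
    have h2 := cot_sq_le_aux h1 (by linarith)
    rw [Real.cos_pi_sub, Real.sin_pi_sub, neg_sq] at h2
    have h3 : (0:ℝ) ≤ 1 / t ^ 2 := by positivity
    linarith

lemma one_add_log_pi_pos : 0 < 1 + Real.log π := by
  have := Real.log_pos (by linarith [Real.pi_gt_three] : (1:ℝ) < π)
  linarith

lemma psi_eq {t : ℝ} (ht : t ∈ Ioo 0 π) :
    psi t = (1 + Real.log π) - Real.log (Real.sin t) := by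
  have hs : 0 < Real.sin t := Real.sin_pos_of_pos_of_lt_pi ht.1 ht.2
  unfold psi
  rw [Real.log_div (by positivity) hs.ne',
    Real.log_mul Real.pi_ne_zero (Real.exp_ne_zero 1), Real.log_exp]
  ring

lemma psi_ge {t : ℝ} (ht : t ∈ Ioo 0 π) : 1 + Real.log π ≤ psi t := by
  have hs : 0 < Real.sin t := Real.sin_pos_of_pos_of_lt_pi ht.1 ht.2
  rw [psi_eq ht]
  have : Real.log (Real.sin t) ≤ 0 := Real.log_nonpos hs.le (Real.sin_le_one t)
  linarith

lemma Gfun_abs_le {t : ℝ} (ht : t ∈ Ioo 0 π) : |Gfun t| ≤ Bconst := by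
  have hc : 0 < 1 + Real.log π := one_add_log_pi_pos
  have hψ : 1 + Real.log π ≤ psi t := psi_ge ht
  have hψpos : 0 < psi t := lt_of_lt_of_le hc hψ
  have hM0 := Mfun_nonneg ht
  have hM8 := Mfun_le ht
  have hG0 : 0 ≤ Gfun t := by
    unfold Gfun
    have : (0:ℝ) ≤ Mfun t / psi t ^ 2 := by positivity
    have : (0:ℝ) ≤ 2 / psi t := by positivity
    unfold Gfun at *
    positivity
  have hGB : Gfun t ≤ Bconst := by
    unfold Gfun Bconst
    have h1 : Mfun t / psi t ^ 2 ≤ (8 / π ^ 2) / (1 + Real.log π) ^ 2 :=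
      div_le_div₀ (by positivity) hM8 (by positivity) (by nlinarith)
    have h2 : 2 / psi t ≤ 2 / (1 + Real.log π) :=
      div_le_div_of_nonneg_left (by norm_num) hc hψ
    have h3 : (8 / π ^ 2) / (1 + Real.log π) ^ 2 = 8 / (π ^ 2 * (1 + Real.log π) ^ 2) := by
      rw [div_div]
    linarith
  rw [abs_le]
  constructor <;> linarith

lemma Gfun_pi_div_two : Gfun (π / 2) = Bconst := by
  have hc : (0:ℝ) < 1 + Real.log π := one_add_log_pi_pos
  have hπ : (0:ℝ) < π := Real.pi_pos
  unfold Gfun Mfun psi Bconst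
  rw [Real.sin_pi_div_two, Real.cos_pi_div_two, show π - π / 2 = π / 2 from by ring,
    div_one, Real.log_mul Real.pi_ne_zero (Real.exp_ne_zero 1), Real.log_exp]
  rw [show Real.log π + 1 = 1 + Real.log π from by ring]
  field_simp
  ring

lemma psi_tendsto_top : Tendsto psi (𝓝[>] (0:ℝ)) atTop := by
  have hmem : Ioo (0:ℝ) π ∈ 𝓝[>] (0:ℝ) := Ioo_mem_nhdsGT Real.pi_pos
  have hsin : Tendsto Real.sin (𝓝[>] (0:ℝ)) (𝓝[>] (0:ℝ)) := by
    apply tendsto_nhdsWithin_of_tendsto_nhds_of_eventually_within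
    · have := Real.continuous_sin.tendsto 0
      rw [Real.sin_zero] at this
      exact this.mono_left nhdsWithin_le_nhds
    · filter_upwards [hmem] with t ht
      exact Real.sin_pos_of_pos_of_lt_pi ht.1 ht.2
  have hlog : Tendsto (fun t => Real.log (Real.sin t)) (𝓝[>] (0:ℝ)) atBot :=
    Real.tendsto_log_nhdsGT_zero.comp hsin
  have haux : Tendsto (fun t => (1 + Real.log π) - Real.log (Real.sin t)) (𝓝[>] (0:ℝ)) atTop := by
    apply tendsto_atTop_add_const_left
    exact tendsto_neg_atBot_atTop.comp hlog
  apply haux.congr'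
  filter_upwards [hmem] with t ht
  exact (psi_eq ht).symm

lemma Gfun_tendsto_zero_right : Tendsto Gfun (𝓝[>] (0:ℝ)) (𝓝 0) := by
  have hmem : Ioo (0:ℝ) π ∈ 𝓝[>] (0:ℝ) := Ioo_mem_nhdsGT Real.pi_pos
  have hψ := psi_tendsto_top
  have h1 : Tendsto (fun t => (8 / π ^ 2) / psi t ^ 2 + 2 / psi t) (𝓝[>] (0:ℝ)) (𝓝 0) := by
    have ha : Tendsto (fun t => psi t ^ 2) (𝓝[>] (0:ℝ)) atTop :=
      hψ.atTop_mul_atTop₀ hψ |>.congr (fun t => by ring)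
    have hb : Tendsto (fun t => (8 / π ^ 2) / psi t ^ 2) (𝓝[>] (0:ℝ)) (𝓝 0) :=
      tendsto_const_nhds.div_atTop ha
    have hc : Tendsto (fun t => 2 / psi t) (𝓝[>] (0:ℝ)) (𝓝 0) :=
      tendsto_const_nhds.div_atTop hψ
    simpa using hb.add hc
  apply tendsto_of_tendsto_of_tendsto_of_le_of_le' tendsto_const_nhds h1
  · filter_upwards [hmem, hψ.eventually_gt_atTop 0] with t ht hψt
    have hM0 := Mfun_nonneg ht
    unfold Gfun
    positivity
  · filter_upwards [hmem, hψ.eventually_gt_atTop 0] with t ht hψt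
    have hM8 := Mfun_le ht
    unfold Gfun
    have : Mfun t / psi t ^ 2 ≤ (8 / π ^ 2) / psi t ^ 2 :=
      div_le_div_of_nonneg_right hM8 (by positivity) |>.trans_eq rfl
    linarith
  
lemma Gfun_symm (t : ℝ) : Gfun (π - t) = Gfun t := by
  unfold Gfun Mfun psi
  rw [Real.sin_pi_sub, Real.cos_pi_sub, show π - (π - t) = t from by ring, neg_sq]
  ring

lemma Gfun_tendsto_zero_left : Tendsto Gfun (𝓝[<] π) (𝓝 0) := by
  have hmap : Tendsto (fun t => π - t) (𝓝[<] π) (𝓝[>] (0:ℝ)) := by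
    apply tendsto_nhdsWithin_of_tendsto_nhds_of_eventually_within
    · have : Tendsto (fun t : ℝ => π - t) (𝓝 π) (𝓝 (π - π)) :=
        (continuous_const.sub continuous_id).tendsto π
      rw [sub_self] at this
      exact this.mono_left nhdsWithin_le_nhds
    · filter_upwards [self_mem_nhdsWithin] with t (ht : t < π)
      exact mem_Ioi.mpr (by linarith)
  have := Gfun_tendsto_zero_right.comp hmap
  apply this.congr
  intro t
  exact Gfun_symm t

/-- `G → 0` at both endpoints of `(0,π)`, `|G| ≤ B` on `(0,π)`, and `G(π/2) = B`. -/
theorem Gfun_properties :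
    Tendsto Gfun (𝓝[>] (0 : ℝ)) (𝓝 0) ∧
    Tendsto Gfun (𝓝[<] π) (𝓝 0) ∧
    (∀ t ∈ Ioo (0 : ℝ) π, |Gfun t| ≤ Bconst) ∧
    Gfun (π / 2) = Bconst :=
  ⟨Gfun_tendsto_zero_right, Gfun_tendsto_zero_left,
    fun _ ht => Gfun_abs_le ht, Gfun_pi_div_two⟩
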